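/- Let m be a squarefree integer with m ≡ 2 or 3 (mod 4), m > 0, and let ξ = (a + b√m)/c with a, b, c ∈ ℤ, c ≥ 2, gcd(a,b,c) = 1. If c² > 4m/5, then there exist γ, δ ∈ ℤ[√m] with 0 < |N(ξγ − δ)| < 1. -/

import Mathlib

lemma no_rat_sq (m : ℤ) (hm : Squarefree m) (hm2 : 2 ≤ m) (r : ℚ) (h : r ^ 2 = (m : ℚ)) :
    False := by
  have hden : ((r.den : ℚ)) ≠ 0 := by exact_mod_cast r.den_ne_zero
  have hnum : (r.num : ℚ) ^ 2 = (m : ℚ) * (r.den : ℚ) ^ 2 := by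
    rw [← Rat.num_div_den r] at h
    field_simp at h
    rw [mul_comm]
    exact_mod_cast h
  have hZ : r.num ^ 2 = m * (r.den : ℤ) ^ 2 := by exact_mod_cast hnum
  have hN : r.num.natAbs ^ 2 = m.natAbs * r.den ^ 2 := by
    have := congrArg Int.natAbs hZ
    simpa [Int.natAbs_mul, Int.natAbs_pow, Int.natAbs_of_nonneg (le_of_lt (by omega : (0:ℤ) < m))] using this
  have hcop : Nat.Coprime r.num.natAbs r.den := r.reduced
  have hd1 : r.den = 1 := by
    have hdvd : r.den ^ 2 ∣ r.num.natAbs ^ 2 := ⟨m.natAbs, by rw [hN]; ring⟩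
    have hcop2 : Nat.Coprime (r.num.natAbs ^ 2) (r.den ^ 2) := Nat.Coprime.pow 2 2 hcop
    have : r.den ^ 2 ∣ 1 := by
      have := Nat.dvd_gcd hdvd dvd_rfl
      rwa [Nat.Coprime.gcd_eq_one hcop2] at this
    have := Nat.le_of_dvd one_pos this
    nlinarith [r.pos]
  have hm' : r.num * r.num ∣ m := by
    refine ⟨1, ?_⟩
    have : r.num ^ 2 = m := by rw [hZ, hd1]; push_cast; ring
    rw [← this]; ring
  have := hm r.num hm'
  rcases Int.isUnit_iff.mp this with h1 | h1 <;> rw [h1] at hZ <;> rw [hd1] at hZ <;> omega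

lemma key_approx (M : ℚ) (hM0 : 0 < M) (hM : M < 5/4) (hirr : ∀ u : ℚ, u ^ 2 ≠ M) (t : ℚ) :
    ∃ d : ℤ, 0 < |(t - d) ^ 2 - M| ∧ |(t - d) ^ 2 - M| < 1 := by
  have hM1 : M ≠ 1 := fun h => hirr 1 (by rw [h]; norm_num)
  rcases lt_or_gt_of_ne hM1 with hlt | hgt
  · -- M < 1 : round
    refine ⟨round t, ?_, ?_⟩
    · rw [abs_pos]
      intro h
      exact hirr (t - round t) (by linarith)
    · have hu : |t - round t| ≤ 1/2 := abs_sub_round t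
      have hu2 : (t - round t) ^ 2 ≤ 1/4 := by
        rcases abs_le.mp hu with ⟨h1, h2⟩; nlinarith
      have hu0 : 0 ≤ (t - round t) ^ 2 := sq_nonneg _
      rw [abs_lt]; constructor <;> nlinarith
  · -- M > 1 : pick u with 1/4 ≤ u² ≤ 1
    set d : ℤ := if Int.fract t < 1/2 then ⌊t⌋ + 1 else ⌊t⌋ with hd
    have hfr : t - ⌊t⌋ = Int.fract t := (Int.self_sub_floor t).symm ▸ rfl
    have hf0 : 0 ≤ Int.fract t := Int.fract_nonneg t
    have hf1 : Int.fract t < 1 := Int.fract_lt_one t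
    have hu : 1/4 ≤ (t - d) ^ 2 ∧ (t - d) ^ 2 ≤ 1 := by
      rw [hd]
      split_ifs with h
      · push_cast
        have : t - (⌊t⌋ + 1) = Int.fract t - 1 := by rw [Int.fract]; ring
        rw [this]
        constructor <;> nlinarith
      · push_neg at h
        have : t - (⌊t⌋ : ℚ) = Int.fract t := by rw [Int.fract]
        rw [this]
        constructor <;> nlinarith
    obtain ⟨hu1, hu2⟩ := hu
    have habs : |(t - (d:ℚ)) ^ 2 - M| = M - (t - (d:ℚ)) ^ 2 := by
      rw [abs_of_neg (by nlinarith)]; ring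
    exact ⟨d, by rw [habs]; nlinarith, by rw [habs]; nlinarith⟩

/-- Elements of ℚ(√m) are represented by rational coordinates (u, v) ↦ u + v√m,
with norm u² − m v².  ξ = (a + b√m)/c, γ = γ₁ + γ₂√m, δ = δ₁ + δ₂√m ∈ ℤ[√m]. -/
theorem dh_pos_case (m : ℤ) (hm : Squarefree m) (hm23 : m % 4 = 2 ∨ m % 4 = 3)
    (hmpos : 0 < m) (a b c : ℤ) (hc : 2 ≤ c)
    (hgcd : Int.gcd (Int.gcd a b) c = 1)
    (hbound : ((c : ℚ)) ^ 2 > 4 * (m : ℚ) / 5) :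
    ∃ γ₁ γ₂ δ₁ δ₂ : ℤ,
      0 < |((a * γ₁ + m * b * γ₂ : ℤ) / (c : ℚ) - (δ₁ : ℚ)) ^ 2
            - (m : ℚ) * ((a * γ₂ + b * γ₁ : ℤ) / (c : ℚ) - (δ₂ : ℚ)) ^ 2| ∧
      |((a * γ₁ + m * b * γ₂ : ℤ) / (c : ℚ) - (δ₁ : ℚ)) ^ 2
            - (m : ℚ) * ((a * γ₂ + b * γ₁ : ℤ) / (c : ℚ) - (δ₂ : ℚ)) ^ 2| < 1 := by
  have hm2 : 2 ≤ m := by omega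
  have hcQ : (0:ℚ) < (c : ℚ) := by exact_mod_cast (by omega : (0:ℤ) < c)
  have hcop : IsCoprime ((Int.gcd a b : ℤ)) c := Int.isCoprime_iff_gcd_eq_one.mpr hgcd
  obtain ⟨p, q, hpq⟩ := hcop
  set e := Int.gcdA a b with he
  set f := Int.gcdB a b with hf
  have hg : ((Int.gcd a b : ℤ)) = a * e + b * f := Int.gcd_eq_gcd_ab a b
  have hy : a * (p * e) + b * (p * f) = 1 - q * c := by linear_combination hpq - p * hg
  have hM0 : 0 < (m : ℚ) / (c : ℚ) ^ 2 := by positivity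
  have hM54 : (m : ℚ) / (c : ℚ) ^ 2 < 5/4 := by
    rw [div_lt_iff₀ (by positivity)]
    linarith
  have hirr : ∀ u : ℚ, u ^ 2 ≠ (m : ℚ) / (c : ℚ) ^ 2 := by
    intro u hu
    refine no_rat_sq m hm hm2 (u * c) ?_
    rw [mul_pow, hu]
    field_simp
  obtain ⟨d, h1, h2⟩ := key_approx _ hM0 hM54 hirr (((a * (p * f) + m * b * (p * e) : ℤ) : ℚ) / (c : ℚ))
  refine ⟨p * f, p * e, d, -q, ?_, ?_⟩ <;>
  · have hyQ : ((a * (p * e) + b * (p * f) : ℤ) : ℚ) = 1 - (q : ℚ) * (c : ℚ) := by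
      exact_mod_cast congrArg (fun z : ℤ => (z : ℚ)) hy
    have hY : ((a * (p * e) + b * (p * f) : ℤ) : ℚ) / (c : ℚ) - ((-q : ℤ) : ℚ) = 1 / (c : ℚ) := by
      rw [hyQ]; push_cast; field_simp; ring
    rw [hY]
    have hMeq : (m : ℚ) * (1 / (c : ℚ)) ^ 2 = (m : ℚ) / (c : ℚ) ^ 2 := by
      rw [div_pow, one_pow, mul_one_div]
    rw [hMeq]
    first
    | exact h1
    | exact h2
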